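/- Let f(z) = z^{m₀}(c₀ + c₁z + c₂z² + ...) be a complex polynomial with m₀ ≤ m, where m is sufficiently large, a = a(m) ∈ (0,1], |c₀| ≥ e^{-C₁ m^a}, and Σᵢ|cᵢ| ≤ e^{C₁ m^a}. Then for fixed p ∈ (0,1), q = 1-p, there exist w ∈ ℂ with |w| ≤ 1 and a constant C > 0 (depending on C₁, p) such that |f(pw + q)| ≥ exp(-C m^{(1+2a)/3}). -/

import Mathlib

open Real Complex Polynomial


lemma myCont (u : ℂ) (hu : ‖u‖ < 1) :
    Continuous (fun θ : ℝ => Complex.log (1 - u * Complex.exp (θ * Complex.I))) := by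
  rw [continuous_iff_continuousAt]
  intro θ
  have h1 : ‖u * Complex.exp (θ * Complex.I)‖ < 1 := by
    rw [norm_mul]
    have := Complex.norm_exp_ofReal_mul_I θ
    rw [this, mul_one]; exact hu
  have hslit : (1 - u * Complex.exp (θ * Complex.I)) ∈ Complex.slitPlane := by
    refine Or.inl ?_
    have h2 : (u * Complex.exp (θ * Complex.I)).re ≤ ‖u * Complex.exp (θ * Complex.I)‖ :=
      Complex.re_le_norm _
    simp only [Complex.sub_re, Complex.one_re]; linarith
  exact ContinuousAt.clog (by fun_prop) hslit

lemma myL1 (u : ℂ) (hu : ‖u‖ < 1) :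
    (∫ θ in (0:ℝ)..(2*π), Real.log ‖1 - u * Complex.exp (θ * Complex.I)‖) = 0 := by
  have hd : ∀ z ∈ Metric.closedBall (0:ℂ) 1, DifferentiableAt ℂ (fun z => Complex.log (1 - u*z)) z := by
    intro z hz
    simp only [Metric.mem_closedBall, dist_zero_right] at hz
    have hslit : (1 - u*z) ∈ Complex.slitPlane := by
      refine Or.inl ?_
      have h1 : ‖u*z‖ < 1 := by
        calc ‖u*z‖ = ‖u‖*‖z‖ := norm_mul _ _
        _ ≤ ‖u‖ * 1 := by nlinarith [norm_nonneg (u:ℂ), norm_nonneg z]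
        _ < 1 := by nlinarith
      have h2 : (u*z).re ≤ ‖u*z‖ := Complex.re_le_norm _
      simp only [Complex.sub_re, Complex.one_re]
      linarith
    exact DifferentiableAt.comp (f := fun z => 1 - u*z) z (Complex.differentiableAt_log hslit) (by fun_prop)
  have hdc : DiffContOnCl ℂ (fun z => Complex.log (1 - u*z)) (Metric.ball (0:ℂ) 1) := by
    apply DifferentiableOn.diffContOnCl
    rw [closure_ball (0:ℂ) one_ne_zero]
    exact fun z hz => (hd z hz).differentiableWithinAt
  have hC := hdc.circleIntegral_sub_inv_smul (w := 0) (by simp)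
  simp only [mul_zero, sub_zero, Complex.log_one, smul_zero] at hC
  -- unfold circle integral
  rw [circleIntegral] at hC
  simp only [deriv_circleMap, circleMap_zero, sub_zero, smul_eq_mul] at hC
  have hC2 : (∫ θ in (0:ℝ)..(2*π),
      Complex.I * Complex.log (1 - u * Complex.exp (θ * Complex.I))) = 0 := by
    rw [← hC]
    apply intervalIntegral.integral_congr
    intro θ _
    have hne : (↑(1:ℝ) * Complex.exp (θ * Complex.I)) ≠ 0 := by
      simp [Complex.exp_ne_zero]
    field_simp
    simp
  rw [intervalIntegral.integral_const_mul] at hC2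
  have hC3 : (∫ θ in (0:ℝ)..(2*π), Complex.log (1 - u * Complex.exp (θ * Complex.I))) = 0 := by
    rcases mul_eq_zero.mp hC2 with h | h
    · exact absurd h Complex.I_ne_zero
    · exact h
  have hInt : IntervalIntegrable (fun θ : ℝ => Complex.log (1 - u * Complex.exp (θ * Complex.I)))
      MeasureTheory.volume 0 (2*π) := (myCont u hu).intervalIntegrable _ _
  have := Complex.reCLM.intervalIntegral_comp_comm hInt
  rw [hC3] at this
  simp only [map_zero] at this
  refine Eq.trans (intervalIntegral.integral_congr (g := fun θ : ℝ =>
    Complex.reCLM (Complex.log (1 - u * Complex.exp (θ * Complex.I)))) fun θ _ => ?_) this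
  have hne : (1 - u * Complex.exp (θ * Complex.I)) ≠ 0 := by
    intro h
    have : ‖u * Complex.exp (θ * Complex.I)‖ = 1 := by
      have : u * Complex.exp (θ * Complex.I) = 1 := by linear_combination -h
      rw [this, norm_one]
    rw [norm_mul] at this
    have h2 := Complex.norm_exp_ofReal_mul_I θ
    rw [h2, mul_one] at this; linarith
  simp only [Complex.reCLM_apply, Complex.log_re]

lemma exp_theta_periodic : Function.Periodic (fun θ : ℝ => Complex.exp (θ * Complex.I)) (2*π) := by
  intro θ
  simp only []
  push_cast
  rw [add_mul, Complex.exp_add, Complex.exp_two_pi_mul_I, mul_one]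

lemma myL2 (u : ℂ) (hu : ‖u‖ < 1) :
    (∫ θ in (0:ℝ)..(2*π), Real.log ‖1 - u * Complex.exp (-(θ * Complex.I))‖) = 0 := by
  have hper : Function.Periodic (fun θ : ℝ => Real.log ‖1 - u * Complex.exp (θ * Complex.I)‖) (2*π) := by
    intro θ
    simp only [exp_theta_periodic θ]
  have h1 : (∫ θ in (0:ℝ)..(2*π), Real.log ‖1 - u * Complex.exp (-(θ * Complex.I))‖)
      = ∫ θ in (-(2*π))..(-(0:ℝ)), Real.log ‖1 - u * Complex.exp (θ * Complex.I)‖ := by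
    rw [← intervalIntegral.integral_comp_neg
      (fun θ => Real.log ‖1 - u * Complex.exp (θ * Complex.I)‖)]
    refine intervalIntegral.integral_congr fun θ _ => ?_
    push_cast
    ring_nf
  rw [h1]
  have h2 := hper.intervalIntegral_add_eq (-(2*π)) 0
  simp only [zero_add] at h2
  have : -(2*π) + 2*π = -(0:ℝ) := by ring
  rw [this] at h2
  rw [h2, myL1 u hu]

lemma norm_exp_I (z : ℂ) (hz : z.re = 0) : ‖Complex.exp z‖ = 1 := by
  simp only [Complex.norm_exp, hz, Real.exp_zero]

lemma norm_ofReal_pos (R : ℝ) (hR : 0 ≤ R) : ‖(R:ℂ)‖ = R := by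
  rw [Complex.norm_real, Real.norm_eq_abs, _root_.abs_of_nonneg hR]

lemma norm_z (R θ : ℝ) (hR : 0 ≤ R) : ‖(R:ℂ) * Complex.exp (θ * Complex.I)‖ = R := by
  rw [norm_mul, norm_exp_I _ (by simp), mul_one, norm_ofReal_pos R hR]

lemma one_sub_ne (v e : ℂ) (hv : ‖v‖ < 1) (he : ‖e‖ = 1) : (1:ℂ) - v * e ≠ 0 := by
  intro hz
  have h1 : v * e = 1 := by linear_combination -hz
  have h2 : ‖v * e‖ = 1 := by rw [h1, norm_one]
  rw [norm_mul, he, mul_one] at h2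
  linarith

lemma cont_one_sub (v : ℂ) (hv : ‖v‖ < 1) (E : ℝ → ℂ) (hE : Continuous E)
    (hEn : ∀ θ, ‖E θ‖ = 1) : Continuous fun θ : ℝ => Real.log ‖1 - v * E θ‖ := by
  rw [continuous_iff_continuousAt]
  intro θ
  exact ContinuousAt.log (by fun_prop)
    (norm_ne_zero_iff.mpr (one_sub_ne v (E θ) hv (hEn θ)))

lemma contE1 : Continuous fun θ : ℝ => Complex.exp (θ * Complex.I) := by fun_prop

lemma contE2 : Continuous fun θ : ℝ => Complex.exp (-(θ * Complex.I)) := by fun_prop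

lemma normE1 (θ : ℝ) : ‖Complex.exp (θ * Complex.I)‖ = 1 := norm_exp_I _ (by simp)

lemma normE2 (θ : ℝ) : ‖Complex.exp (-(θ * Complex.I))‖ = 1 := norm_exp_I _ (by simp)

lemma hexp_mul (θ : ℝ) : Complex.exp (θ * Complex.I) * Complex.exp (-(θ * Complex.I)) = 1 := by
  rw [← Complex.exp_add]; simp

lemma cont_log_norm (R : ℝ) (hR : 0 < R) (w : ℂ) (hw : ‖w‖ ≠ R) :
    Continuous fun θ : ℝ => Real.log ‖(R:ℂ) * Complex.exp (θ * Complex.I) - w‖ := by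
  rw [continuous_iff_continuousAt]
  intro θ
  have hne : (R:ℂ) * Complex.exp (θ * Complex.I) - w ≠ 0 := by
    intro h
    have h1 : (R:ℂ) * Complex.exp (θ * Complex.I) = w := by linear_combination h
    rw [← h1, norm_z R θ hR.le] at hw
    exact hw rfl
  exact ContinuousAt.log (by fun_prop) (norm_ne_zero_iff.mpr hne)

lemma circ_avg (R : ℝ) (hR : 0 < R) (w : ℂ) (hw : ‖w‖ ≠ R) :
    (∫ θ in (0:ℝ)..(2*π), Real.log ‖(R:ℂ) * Complex.exp (θ * Complex.I) - w‖)
      = 2*π*Real.log (max R ‖w‖) := by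
  have hRne : (R:ℂ) ≠ 0 := by exact_mod_cast hR.ne'
  rcases lt_or_gt_of_ne hw with h | h
  · -- ‖w‖ < R
    have hmax : max R ‖w‖ = R := max_eq_left h.le
    have hu : ‖w/(R:ℂ)‖ < 1 := by
      rw [norm_div, norm_ofReal_pos R hR.le, div_lt_one hR]; exact h
    have hme : ∀ θ : ℝ, Real.log ‖(R:ℂ) * Complex.exp (θ * Complex.I) - w‖
        = Real.log R + Real.log ‖1 - (w/(R:ℂ)) * Complex.exp (-(θ * Complex.I))‖ := by
      intro θ
      have hfac : (R:ℂ) * Complex.exp (θ * Complex.I) - w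
          = ((R:ℂ) * Complex.exp (θ * Complex.I))
            * (1 - (w/(R:ℂ)) * Complex.exp (-(θ * Complex.I))) := by
        field_simp
        linear_combination w * hexp_mul θ
      rw [hfac, norm_mul, norm_z R θ hR.le]
      exact Real.log_mul hR.ne'
        (norm_ne_zero_iff.mpr (one_sub_ne _ _ hu (normE2 θ)))
    rw [intervalIntegral.integral_congr (g := fun θ : ℝ => Real.log R
      + Real.log ‖1 - (w/(R:ℂ)) * Complex.exp (-(θ * Complex.I))‖) (fun θ _ => hme θ)]
    rw [intervalIntegral.integral_add intervalIntegrable_const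
      ((cont_one_sub _ hu _ contE2 normE2).intervalIntegrable _ _)]
    rw [myL2 _ hu, intervalIntegral.integral_const, hmax]
    simp [smul_eq_mul]
  · -- R < ‖w‖
    have hw0 : w ≠ 0 := by
      intro h0; rw [h0, norm_zero] at h; linarith
    have hmax : max R ‖w‖ = ‖w‖ := max_eq_right h.le
    have hu : ‖(R:ℂ)/w‖ < 1 := by
      rw [norm_div, norm_ofReal_pos R hR.le, div_lt_one (norm_pos_iff.mpr hw0)]; exact h
    have hme : ∀ θ : ℝ, Real.log ‖(R:ℂ) * Complex.exp (θ * Complex.I) - w‖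
        = Real.log ‖w‖ + Real.log ‖1 - ((R:ℂ)/w) * Complex.exp (θ * Complex.I)‖ := by
      intro θ
      have hfac : (R:ℂ) * Complex.exp (θ * Complex.I) - w
          = (-w) * (1 - ((R:ℂ)/w) * Complex.exp (θ * Complex.I)) := by
        field_simp
        ring
      rw [hfac, norm_mul, norm_neg]
      exact Real.log_mul (norm_ne_zero_iff.mpr hw0)
        (norm_ne_zero_iff.mpr (one_sub_ne _ _ hu (normE1 θ)))
    rw [intervalIntegral.integral_congr (g := fun θ : ℝ => Real.log ‖w‖
      + Real.log ‖1 - ((R:ℂ)/w) * Complex.exp (θ * Complex.I)‖) (fun θ _ => hme θ)]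
    rw [intervalIntegral.integral_add intervalIntegrable_const
      ((cont_one_sub _ hu _ contE1 normE1).intervalIntegrable _ _)]
    rw [myL1 _ hu, intervalIntegral.integral_const, hmax]
    simp [smul_eq_mul]

lemma circ_avg' (R : ℝ) (hR : 0 < R) (w : ℂ) (hw : ‖w‖ ≠ R) :
    (∫ θ in (-π)..π, Real.log ‖(R:ℂ) * Complex.exp (θ * Complex.I) - w‖)
      = 2*π*Real.log (max R ‖w‖) := by
  have hper : Function.Periodic
      (fun θ : ℝ => Real.log ‖(R:ℂ) * Complex.exp (θ * Complex.I) - w‖) (2*π) := by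
    intro θ
    simp only [exp_theta_periodic θ]
  have h2 := hper.intervalIntegral_add_eq (-π) 0
  simp only [zero_add] at h2
  have h3 : -π + 2*π = π := by ring
  rw [h3] at h2
  rw [h2, circ_avg R hR w hw]


lemma list_prod_getD (l : List ℂ) (F : ℂ → ℂ) :
    (l.map F).prod = ∏ i ∈ Finset.range l.length, F (l.getD i 0) := by
  induction l with
  | nil => simp
  | cons a l ih =>
    rw [List.map_cons, List.prod_cons, ih, List.length_cons, Finset.prod_range_succ']
    simp [List.getD_cons_succ, List.getD_cons_zero, mul_comm]

lemma poly_factor (g : Polynomial ℂ) (z : ℂ) :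
    g.eval z = g.leadingCoeff
      * ∏ i ∈ Finset.range g.roots.toList.length, (z - g.roots.toList.getD i 0) := by
  conv_lhs => rw [(IsAlgClosed.splits g).eq_prod_roots]
  rw [Polynomial.eval_mul, Polynomial.eval_C, Polynomial.eval_multiset_prod]
  congr 1
  rw [Multiset.map_map]
  have : g.roots = (g.roots.toList : Multiset ℂ) := (Multiset.coe_toList _).symm
  conv_lhs => rw [this, Multiset.map_coe, Multiset.prod_coe]
  rw [← list_prod_getD g.roots.toList (fun a => z - a)]
  congr 1
  ext a
  simp



lemma sq_le_imp (x q : ℝ) (hx : 0 ≤ x) (hq : 0 < q) (h : x^2 ≤ q^2) : x ≤ q := by nlinarith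

lemma geom_core (p t θ : ℝ) (hp0 : 0 < p) (hp1 : p < 1) (ht0 : 0 < t) (htp : t ≤ p/2)
    (hθ : θ^2 ≤ p*t) : (1-t)^2 + (1-p)^2 - 2*(1-p)*(1-t)*Real.cos θ ≤ p^2 := by
  have hcos : 1 - θ^2/2 ≤ Real.cos θ := Real.one_sub_sq_div_two_le_cos
  have e1 : (0:ℝ) ≤ (1-p)*(1-t) := by nlinarith
  have e2 : -(2*(1-p)*(1-t)*Real.cos θ) ≤ -(2*(1-p)*(1-t)*(1 - θ^2/2)) := by nlinarith
  have e3 : (1-p)*(1-t) ≤ 1 := by nlinarith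
  have e4 : (1-p)*(1-t)*θ^2 ≤ p*t := by
    calc (1-p)*(1-t)*θ^2 ≤ 1*θ^2 := mul_le_mul_of_nonneg_right e3 (sq_nonneg θ)
    _ ≤ p*t := by linarith
  nlinarith [e2, e4]

lemma sqrt_add_le' (x y : ℝ) (hx : 0 ≤ x) (hy : 0 ≤ y) :
    Real.sqrt (x+y) ≤ Real.sqrt x + Real.sqrt y := by
  have h := Real.sqrt_le_sqrt (show x + y ≤ (Real.sqrt x + Real.sqrt y)^2 by
    nlinarith [Real.sq_sqrt hx, Real.sq_sqrt hy, Real.sqrt_nonneg x, Real.sqrt_nonneg y])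
  rwa [Real.sqrt_sq (by positivity)] at h

lemma exp_neg_two_le (t : ℝ) (h0 : 0 < t) (h2 : t ≤ 1/2) : Real.exp (-(2*t)) ≤ 1 - t := by
  have h1 : 1 + 2*t ≤ Real.exp (2*t) := by
    have := Real.add_one_le_exp (2*t)
    linarith
  have h4 : Real.exp (-(2*t)) * Real.exp (2*t) = 1 := by
    rw [← Real.exp_add]; simp
  have h5 : (1:ℝ) ≤ (1-t) * (1 + 2*t) := by nlinarith
  nlinarith [Real.exp_pos (2*t), Real.exp_pos (-(2*t))]

set_option maxHeartbeats 2000000 in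
/-- Polynomial lower bound lemma: if `f = z^{m₀}·g` with `m₀ ≤ m`, `a ∈ (0,1]`,
`|g(0)| ≥ e^{-C₁ m^a}` and the sum of moduli of coefficients of `g` at most `e^{C₁ m^a}`,
then for some `w` with `|w| ≤ 1` one has `|f(pw+q)| ≥ exp(-C m^{(1+2a)/3})`,
with `C` depending only on `C₁` and `p`, provided `m` is sufficiently large. -/
theorem stmt_2 (p C₁ : ℝ) (hp0 : 0 < p) (hp1 : p < 1) (hC₁ : 0 < C₁) :
    ∃ C : ℝ, 0 < C ∧ ∃ M : ℕ, ∀ m : ℕ, M ≤ m → ∀ a : ℝ, 0 < a → a ≤ 1 →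
      ∀ m₀ : ℕ, m₀ ≤ m → ∀ g : Polynomial ℂ,
        Real.exp (-C₁ * (m : ℝ) ^ a) ≤ ‖g.coeff 0‖ →
        (∑ i ∈ Finset.range (g.natDegree + 1), ‖g.coeff i‖) ≤ Real.exp (C₁ * (m : ℝ) ^ a) →
        ∃ w : ℂ, ‖w‖ ≤ 1 ∧
          Real.exp (-C * (m : ℝ) ^ ((1 + 2 * a) / 3)) ≤
            ‖(Polynomial.X ^ m₀ * g).eval ((p : ℂ) * w + ((1 - p : ℝ) : ℂ))‖ := by
  refine ⟨2 + C₁ + 2*π*C₁*(Real.sqrt (2/p) + 2/p), by positivity, 1, ?_⟩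
  intro m hm a ha0 ha1 m₀ hm₀ g hlow hsum
  set C : ℝ := 2 + C₁ + 2*π*C₁*(Real.sqrt (2/p) + 2/p) with hC
  have hm1 : (1:ℝ) ≤ (m:ℝ) := by exact_mod_cast hm
  have hm0 : (0:ℝ) < (m:ℝ) := by linarith
  set A : ℝ := C₁ * (m:ℝ)^a with hA
  have hApos : 0 < A := by positivity
  set B : ℝ := (m:ℝ) ^ ((1 + 2*a)/3) with hB
  have hB1 : (1:ℝ) ≤ B := Real.one_le_rpow hm1 (by linarith)
  have hBm : B ≤ (m:ℝ) := by
    have := Real.rpow_le_rpow_of_exponent_le hm1 (show (1+2*a)/3 ≤ 1 by linarith)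
    rwa [Real.rpow_one] at this
  have hmaB : (m:ℝ)^a ≤ B := Real.rpow_le_rpow_of_exponent_le hm1 (by linarith)
  -- basic data about g
  have hgc0 : g.coeff 0 ≠ 0 := by
    intro h; rw [h, norm_zero] at hlow; exact absurd hlow (not_le.mpr (Real.exp_pos _))
  have hgne : g ≠ 0 := fun h => hgc0 (by simp [h])
  set c : ℂ := g.leadingCoeff with hc
  have hcne : c ≠ 0 := Polynomial.leadingCoeff_ne_zero.mpr hgne
  have hcpos : 0 < ‖c‖ := norm_pos_iff.mpr hcne
  set l : List ℂ := g.roots.toList with hldef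
  set n : ℕ := l.length with hn
  set ρ : ℕ → ℂ := fun i => l.getD i 0 with hρ
  have hfact : ∀ z : ℂ, g.eval z = c * ∏ i ∈ Finset.range n, (z - ρ i) := fun z => poly_factor g z
  have hnormfact : ∀ z : ℂ, ‖g.eval z‖ = ‖c‖ * ∏ i ∈ Finset.range n, ‖z - ρ i‖ := by
    intro z; rw [hfact z, norm_mul, norm_prod]
  -- anchor from coeff 0
  have hanch : Real.exp (-A) ≤ ‖c‖ * ∏ i ∈ Finset.range n, ‖ρ i‖ := by
    have h0 : g.coeff 0 = g.eval 0 := Polynomial.coeff_zero_eq_eval_zero g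
    have h1 := hlow
    rw [h0] at h1
    rw [hnormfact 0] at h1
    have h2 : ∀ i ∈ Finset.range n, ‖(0:ℂ) - ρ i‖ = ‖ρ i‖ := by intro i _; simp
    rw [Finset.prod_congr rfl h2] at h1
    calc Real.exp (-A) = Real.exp (-C₁ * (m:ℝ)^a) := by rw [hA]; ring_nf
    _ ≤ _ := h1
  have hrhopos : ∀ i ∈ Finset.range n, 0 < ‖ρ i‖ := by
    intro i hi
    rcases eq_or_lt_of_le (norm_nonneg (ρ i)) with h | h
    · exfalso
      have : (∏ j ∈ Finset.range n, ‖ρ j‖) = 0 :=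
        Finset.prod_eq_zero hi h.symm
      rw [this, mul_zero] at hanch
      exact absurd hanch (not_le.mpr (Real.exp_pos _))
    · exact h
  -- sup bound on closed unit disk
  have hup : ∀ z : ℂ, ‖z‖ ≤ 1 → ‖g.eval z‖ ≤ Real.exp A := by
    intro z hz
    rw [Polynomial.eval_eq_sum_range]
    calc ‖∑ i ∈ Finset.range (g.natDegree + 1), g.coeff i * z ^ i‖
        ≤ ∑ i ∈ Finset.range (g.natDegree + 1), ‖g.coeff i * z ^ i‖ := norm_sum_le _ _
    _ ≤ ∑ i ∈ Finset.range (g.natDegree + 1), ‖g.coeff i‖ := by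
        apply Finset.sum_le_sum
        intro i _
        rw [norm_mul, norm_pow]
        nlinarith [pow_le_one₀ (norm_nonneg z) hz (n := i), norm_nonneg (g.coeff i),
          pow_nonneg (norm_nonneg z) i]
    _ ≤ Real.exp A := hsum
  -- choose the radius parameter t
  set t₀ : ℝ := B / (m:ℝ) with ht₀
  have ht₀pos : 0 < t₀ := by positivity
  have ht₀le : t₀ ≤ 1 := by rw [ht₀, div_le_one hm0]; exact hBm
  set t₁ : ℝ := min t₀ (p/2) with ht₁
  have ht₁pos : 0 < t₁ := lt_min ht₀pos (by linarith)
  obtain ⟨t, htmem, htdodge⟩ :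
      ∃ t, t ∈ Set.Ioc (t₁/2) t₁ ∧ ∀ i ∈ Finset.range n, ‖ρ i‖ ≠ 1 - t := by
    have hinf : (Set.Ioc (t₁/2) t₁).Infinite := Set.Ioc_infinite (by linarith)
    have hfin : (Set.range fun i : Fin n => 1 - ‖ρ i‖).Finite := Set.finite_range _
    obtain ⟨t, ht⟩ := (hinf.diff hfin).nonempty
    refine ⟨t, ht.1, ?_⟩
    intro i hi h
    exact ht.2 ⟨⟨i, Finset.mem_range.mp hi⟩, by show 1 - ‖ρ i‖ = t; rw [h]; ring⟩
  obtain ⟨ht_half, ht_le⟩ := htmem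
  have htpos : 0 < t := lt_trans (by linarith) ht_half
  have htp2 : t ≤ p/2 := le_trans ht_le (min_le_right _ _)
  have hthalf : t ≤ 1/2 := by linarith
  set R : ℝ := 1 - t with hR
  have hRpos : 0 < R := by rw [hR]; linarith
  have hRle : R ≤ 1 := by rw [hR]; linarith
  have hrne : ∀ i ∈ Finset.range n, ‖ρ i‖ ≠ R := fun i hi => htdodge i hi
  set Z : ℝ → ℂ := fun θ => (R:ℂ) * Complex.exp (θ * Complex.I) with hZ
  have hZnorm : ∀ θ, ‖Z θ‖ = R := fun θ => norm_z R θ hRpos.le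
  have hZne : ∀ θ, ∀ i ∈ Finset.range n, Z θ - ρ i ≠ 0 := by
    intro θ i hi h
    have : Z θ = ρ i := by linear_combination h
    have h2 := hZnorm θ
    rw [this] at h2
    exact hrne i hi h2
  set u : ℝ → ℝ := fun θ => ∑ i ∈ Finset.range n, Real.log ‖Z θ - ρ i‖ with hu
  have hcont_term : ∀ i ∈ Finset.range n,
      Continuous fun θ : ℝ => Real.log ‖Z θ - ρ i‖ := by
    intro i hi
    exact cont_log_norm R hRpos (ρ i) (hrne i hi)
  have hcontu : Continuous u := by
    apply continuous_finset_sum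
    exact hcont_term
  set Mx : ℝ := ∑ i ∈ Finset.range n, Real.log (max R ‖ρ i‖) with hMx
  have hmean : (∫ θ in (-π)..π, u θ) = 2*π*Mx := by
    show (∫ θ in (-π)..π, ∑ i ∈ Finset.range n, Real.log ‖Z θ - ρ i‖) = 2*π*Mx
    rw [intervalIntegral.integral_finset_sum
      (fun i hi => ((hcont_term i hi).intervalIntegrable _ _))]
    rw [Finset.mul_sum]
    exact Finset.sum_congr rfl fun i hi => circ_avg' R hRpos (ρ i) (hrne i hi)
  have hptw : ∀ θ : ℝ, u θ ≤ A - Real.log ‖c‖ := by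
    intro θ
    have h1 : ‖g.eval (Z θ)‖ ≤ Real.exp A := hup (Z θ) (by rw [hZnorm]; exact hRle)
    rw [hnormfact] at h1
    have hprodpos : 0 < ∏ i ∈ Finset.range n, ‖Z θ - ρ i‖ := by
      apply Finset.prod_pos
      intro i hi
      exact norm_pos_iff.mpr (hZne θ i hi)
    have h2 : (∏ i ∈ Finset.range n, ‖Z θ - ρ i‖) ≤ Real.exp A / ‖c‖ := by
      rw [le_div_iff₀ hcpos]; linarith [h1]
    have h3 : u θ = Real.log (∏ i ∈ Finset.range n, ‖Z θ - ρ i‖) := by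
      rw [Real.log_prod]
      intro i hi
      exact (norm_pos_iff.mpr (hZne θ i hi)).ne'
    rw [h3]
    calc Real.log (∏ i ∈ Finset.range n, ‖Z θ - ρ i‖) ≤ Real.log (Real.exp A / ‖c‖) :=
      Real.log_le_log hprodpos h2
    _ = A - Real.log ‖c‖ := by
      rw [Real.log_div (Real.exp_ne_zero A) hcpos.ne', Real.log_exp]
  have hMxlow : -A - Real.log ‖c‖ ≤ Mx := by
    have h1 : Real.log (Real.exp (-A) / ‖c‖) ≤ Real.log (∏ i ∈ Finset.range n, ‖ρ i‖) := by
      apply Real.log_le_log (by positivity)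
      rw [div_le_iff₀ hcpos]
      calc Real.exp (-A) ≤ ‖c‖ * ∏ i ∈ Finset.range n, ‖ρ i‖ := hanch
      _ = (∏ i ∈ Finset.range n, ‖ρ i‖) * ‖c‖ := by ring
    rw [Real.log_div (Real.exp_ne_zero _) hcpos.ne', Real.log_exp] at h1
    rw [Real.log_prod (fun i hi => (hrhopos i hi).ne')] at h1
    calc -A - Real.log ‖c‖ ≤ ∑ i ∈ Finset.range n, Real.log ‖ρ i‖ := h1
    _ ≤ Mx := by
      apply Finset.sum_le_sum
      intro i hi
      exact Real.log_le_log (hrhopos i hi) (le_max_right _ _)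
  have hMxup : Mx ≤ A - Real.log ‖c‖ := by
    have h1 : (∫ θ in (-π)..π, u θ) ≤ ∫ _θ in (-π)..π, (A - Real.log ‖c‖) := by
      apply intervalIntegral.integral_mono_on (by linarith [Real.pi_pos])
        (hcontu.intervalIntegrable _ _) intervalIntegrable_const
      intro θ _
      exact hptw θ
    rw [hmean, intervalIntegral.integral_const, smul_eq_mul] at h1
    have hπ := Real.pi_pos
    nlinarith [h1]
  -- the arc
  set L : ℝ := Real.sqrt (p*t) with hL
  have hLpos : 0 < L := Real.sqrt_pos.mpr (by positivity)
  have hLsq : L^2 = p*t := Real.sq_sqrt (by positivity)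
  have hLπ : L ≤ π := by
    have h1 : p*t ≤ 1 := mul_le_one₀ hp1.le htpos.le (by linarith)
    have := Real.sqrt_le_sqrt h1
    rw [Real.sqrt_one] at this
    linarith [Real.pi_gt_three]
  set H : ℝ → ℝ := fun θ => Mx - u θ with hH
  have hcontH : Continuous H := continuous_const.sub hcontu
  have harc : (∫ θ in (-L)..L, H θ) ≤ 4*π*A := by
    have hπ := Real.pi_pos
    have hcontHp : Continuous fun θ => max (H θ) 0 := hcontH.max continuous_const
    have step1 : (∫ θ in (-L)..L, H θ) ≤ ∫ θ in (-L)..L, max (H θ) 0 := by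
      apply intervalIntegral.integral_mono_on (by linarith) (hcontH.intervalIntegrable _ _)
        (hcontHp.intervalIntegrable _ _)
      intro θ _; exact le_max_left _ _
    have step2 : (∫ θ in (-L)..L, max (H θ) 0) ≤ ∫ θ in (-π)..π, max (H θ) 0 := by
      apply intervalIntegral.integral_mono_interval (by linarith) (by linarith) hLπ
        (MeasureTheory.ae_of_all _ (fun θ => le_max_right _ _)) (hcontHp.intervalIntegrable _ _)
    have hzero : (∫ θ in (-π)..π, H θ) = 0 := by
      have h5 : (∫ θ in (-π)..π, H θ)
          = (∫ _θ in (-π)..π, Mx) - ∫ θ in (-π)..π, u θ := by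
        rw [← intervalIntegral.integral_sub
          intervalIntegrable_const (hcontu.intervalIntegrable _ _)]
      rw [h5, hmean, intervalIntegral.integral_const, smul_eq_mul]
      ring
    have step3 : (∫ θ in (-π)..π, max (H θ) 0) ≤ 2*π*(A - Real.log ‖c‖ - Mx) := by
      have hid : ∀ θ : ℝ, max (H θ) 0 = H θ + max (u θ - Mx) 0 := by
        intro θ
        have hHθ : H θ = Mx - u θ := rfl
        rcases le_total (u θ) Mx with h | h
        · rw [max_eq_left (by rw [hHθ]; linarith), max_eq_right (by linarith), add_zero]
        · rw [max_eq_right (by rw [hHθ]; linarith), max_eq_left (by linarith), hHθ]; ring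
      rw [intervalIntegral.integral_congr
        (g := fun θ => H θ + max (u θ - Mx) 0) (fun θ _ => hid θ)]
      have hcmax : Continuous fun θ => max (u θ - Mx) 0 :=
        (hcontu.sub continuous_const).max continuous_const
      rw [intervalIntegral.integral_add (hcontH.intervalIntegrable _ _)
        (hcmax.intervalIntegrable _ _)]
      rw [hzero, zero_add]
      calc (∫ θ in (-π)..π, max (u θ - Mx) 0)
          ≤ ∫ _θ in (-π)..π, (A - Real.log ‖c‖ - Mx) := by
            apply intervalIntegral.integral_mono_on (by linarith)
              (hcmax.intervalIntegrable _ _) intervalIntegrable_const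
            intro θ _
            exact max_le (by linarith [hptw θ]) (by linarith [hMxup])
      _ = 2*π*(A - Real.log ‖c‖ - Mx) := by
            rw [intervalIntegral.integral_const, smul_eq_mul]; ring
    have hfin2 : 2*π*(A - Real.log ‖c‖ - Mx) ≤ 2*π*(2*A) :=
      mul_le_mul_of_nonneg_left (by linarith [hMxlow]) (by positivity)
    calc (∫ θ in (-L)..L, H θ) ≤ 2*π*(A - Real.log ‖c‖ - Mx) := by linarith
    _ ≤ 2*π*(2*A) := hfin2
    _ = 4*π*A := by ring
  -- minimum point on the arc
  obtain ⟨θs, hθsmem, hθsmin⟩ := isCompact_Icc.exists_isMinOn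
    (Set.nonempty_Icc.mpr (by linarith : -L ≤ L)) (hcontH.continuousOn (s := Set.Icc (-L) L))
  have hHθs : H θs ≤ 2*π*A/L := by
    have h1 : (∫ _θ in (-L)..L, H θs) ≤ ∫ θ in (-L)..L, H θ := by
      apply intervalIntegral.integral_mono_on (by linarith)
        intervalIntegrable_const (hcontH.intervalIntegrable _ _)
      intro θ hθ
      exact hθsmin hθ
    rw [intervalIntegral.integral_const, smul_eq_mul] at h1
    have h2 : (L - -L) * H θs ≤ 4*π*A := le_trans h1 harc
    rw [le_div_iff₀ hLpos]
    ring_nf at h2 ⊢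
    linarith [h2]
  have huθs : -A - Real.log ‖c‖ - 2*π*A/L ≤ u θs := by
    have : u θs = Mx - H θs := by rw [hH]; ring
    rw [this]
    have := hMxlow
    linarith [hHθs]
  -- lower bound for |g| at the point
  have hgval : Real.exp (-A - 2*π*A/L) ≤ ‖g.eval (Z θs)‖ := by
    rw [hnormfact]
    have hprodexp : (∏ i ∈ Finset.range n, ‖Z θs - ρ i‖) = Real.exp (u θs) := by
      rw [hu]
      rw [Real.exp_sum]
      apply Finset.prod_congr rfl
      intro i hi
      rw [Real.exp_log (norm_pos_iff.mpr (hZne θs i hi))]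
    rw [hprodexp]
    have h1 : Real.exp (-A - Real.log ‖c‖ - 2*π*A/L) ≤ Real.exp (u θs) := Real.exp_le_exp.mpr huθs
    calc Real.exp (-A - 2*π*A/L)
        = Real.exp (Real.log ‖c‖ + (-A - Real.log ‖c‖ - 2*π*A/L)) := by
          congr 1
          ring
    _ = ‖c‖ * Real.exp (-A - Real.log ‖c‖ - 2*π*A/L) := by
          rw [Real.exp_add, Real.exp_log hcpos]
    _ ≤ ‖c‖ * Real.exp (u θs) := mul_le_mul_of_nonneg_left h1 (norm_nonneg c)
  -- the final point w
  have hπ := Real.pi_pos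
  have hq0 : (0:ℝ) < 1 - p := by linarith
  have hre : (Z θs).re = R * Real.cos θs := by
    rw [hZ]
    simp [Complex.mul_re, Complex.exp_ofReal_mul_I_re, Complex.exp_ofReal_mul_I_im]
  have him : (Z θs).im = R * Real.sin θs := by
    rw [hZ]
    simp [Complex.mul_im, Complex.exp_ofReal_mul_I_re, Complex.exp_ofReal_mul_I_im]
  have hpyth := Real.sin_sq_add_cos_sq θs
  have hnsq : ‖Z θs - ((1 - p : ℝ) : ℂ)‖^2
      = R^2 + (1-p)^2 - 2*(1-p)*R*Real.cos θs := by
    rw [Complex.sq_norm, Complex.normSq_apply]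
    simp only [Complex.sub_re, Complex.sub_im, Complex.ofReal_re, Complex.ofReal_im, hre, him]
    linear_combination (R^2) * hpyth
  have hθs2 : θs^2 ≤ L^2 := by
    obtain ⟨h1, h2⟩ := hθsmem
    exact sq_le_sq' h1 h2
  have hcos : 1 - θs^2/2 ≤ Real.cos θs := Real.one_sub_sq_div_two_le_cos
  have hZq : ‖Z θs - ((1 - p : ℝ) : ℂ)‖ ≤ p := by
    have h2 : ‖Z θs - ((1 - p : ℝ) : ℂ)‖^2 ≤ p^2 := by
      rw [hnsq, hR]
      exact geom_core p t θs hp0 hp1 htpos htp2 (by rw [← hLsq]; exact hθs2)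
    exact sq_le_imp _ _ (norm_nonneg _) hp0 h2
  have hpC : (p:ℂ) ≠ 0 := by exact_mod_cast hp0.ne'
  refine ⟨(Z θs - ((1 - p : ℝ) : ℂ))/(p:ℂ), ?_, ?_⟩
  · rw [norm_div, norm_ofReal_pos p hp0.le, div_le_one hp0]
    exact hZq
  · have hpt : (p:ℂ) * ((Z θs - ((1 - p : ℝ) : ℂ))/(p:ℂ)) + ((1 - p : ℝ) : ℂ) = Z θs := by
      field_simp
      ring
    rw [hpt, Polynomial.eval_mul, Polynomial.eval_pow, Polynomial.eval_X, norm_mul, norm_pow,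
      hZnorm]
    -- numeric core
    have hexp2t : Real.exp (-(2*t)) ≤ R := by
      rw [hR]
      exact exp_neg_two_le t htpos hthalf
    have hRm : Real.exp (-(2*t)*(m:ℝ)) ≤ R^m := by
      have h1 : Real.exp (-(2*t)*(m:ℝ)) = (Real.exp (-(2*t)))^m := by
        rw [← Real.exp_nat_mul]
        congr 1
        ring
      rw [h1]
      exact pow_le_pow_left₀ (Real.exp_pos _).le hexp2t m
    have hRm₀ : R^m ≤ R^m₀ := pow_le_pow_of_le_one hRpos.le hRle hm₀
    -- key numeric inequality
    have h_tm : t*(m:ℝ) ≤ B := by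
      have h1 : t ≤ B/(m:ℝ) := le_trans ht_le (min_le_left _ _)
      calc t*(m:ℝ) ≤ (B/(m:ℝ))*(m:ℝ) := mul_le_mul_of_nonneg_right h1 hm0.le
      _ = B := by field_simp
    have h_A : A ≤ C₁*B := by
      rw [hA]
      exact mul_le_mul_of_nonneg_left hmaB hC₁.le
    have hmB : (m:ℝ)^((2-2*a)/3) = (m:ℝ)/B := by
      rw [hB, show (2-2*a)/3 = 1 - (1+2*a)/3 by ring, Real.rpow_sub hm0, Real.rpow_one]
    have hsq : Real.sqrt ((m:ℝ)/B) = (m:ℝ)^((1-a)/3) := by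
      rw [← hmB, Real.sqrt_eq_rpow, ← Real.rpow_mul (by positivity)]
      congr 1
      ring
    have hAsq : A * Real.sqrt ((m:ℝ)/B) = C₁ * B := by
      rw [hA, hsq, hB, mul_assoc, ← Real.rpow_add hm0,
        show a + (1-a)/3 = (1+2*a)/3 by ring]
    have hLinv : 1/L ≤ Real.sqrt (2/p) * Real.sqrt ((m:ℝ)/B) + 2/p := by
      have e1 : 1/L = Real.sqrt (1/(p*t)) := by
        rw [hL, one_div, one_div, Real.sqrt_inv]
      have f1 : 1/t ≤ 2/t₁ := by
        rw [div_le_div_iff₀ htpos ht₁pos]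
        linarith [ht_half]
      have f2 : 2/t₁ ≤ 2/t₀ + 4/p := by
        rcases le_total t₀ (p/2) with hcase | hcase
        · have heq : t₁ = t₀ := min_eq_left hcase
          rw [heq]
          have : (0:ℝ) ≤ 4/p := by positivity
          linarith
        · have heq : t₁ = p/2 := min_eq_right hcase
          rw [heq]
          have h1 : 2/(p/2) = 4/p := by
            field_simp
            norm_num
          have : (0:ℝ) ≤ 2/t₀ := by positivity
          linarith
      have f3 : 2/t₀ = 2*((m:ℝ)/B) := by
        rw [ht₀, div_div_eq_mul_div, mul_div_assoc]
      have e2 : 1/(p*t) ≤ (2/p)*((m:ℝ)/B) + (2/p)*(2/p) := by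
        calc 1/(p*t) = (1/p)*(1/t) := (one_div_mul_one_div p t).symm
        _ ≤ (1/p)*(2/t₀ + 4/p) :=
            mul_le_mul_of_nonneg_left (by linarith [f1, f2]) (by positivity)
        _ = (1/p)*(2*((m:ℝ)/B) + 4/p) := by rw [f3]
        _ = (2/p)*((m:ℝ)/B) + (2/p)*(2/p) := by ring
      have e3 : Real.sqrt (1/(p*t))
          ≤ Real.sqrt ((2/p)*((m:ℝ)/B)) + Real.sqrt ((2/p)*(2/p)) := by
        have g1 := Real.sqrt_le_sqrt e2
        have g2 := sqrt_add_le' ((2/p)*((m:ℝ)/B)) ((2/p)*(2/p)) (by positivity) (by positivity)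
        linarith
      have e4 : Real.sqrt ((2/p)*((m:ℝ)/B)) = Real.sqrt (2/p) * Real.sqrt ((m:ℝ)/B) :=
        Real.sqrt_mul (by positivity) _
      have e5 : Real.sqrt ((2/p)*(2/p)) = 2/p := Real.sqrt_mul_self (by positivity)
      rw [e4, e5] at e3
      rw [e1]
      exact e3
    have hABL : A/L ≤ Real.sqrt (2/p) * (C₁*B) + (2/p)*(C₁*B) := by
      calc A/L = A*(1/L) := by ring
      _ ≤ A*(Real.sqrt (2/p) * Real.sqrt ((m:ℝ)/B) + 2/p) :=
          mul_le_mul_of_nonneg_left hLinv hApos.le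
      _ = Real.sqrt (2/p) * (A * Real.sqrt ((m:ℝ)/B)) + (2/p)*A := by ring
      _ = Real.sqrt (2/p) * (C₁*B) + (2/p)*A := by rw [hAsq]
      _ ≤ Real.sqrt (2/p) * (C₁*B) + (2/p)*(C₁*B) :=
          add_le_add (le_refl _) (mul_le_mul_of_nonneg_left h_A (by positivity))
    have hkey : 2*t*(m:ℝ) + A + 2*π*A/L ≤ C*B := by
      have h1 : 2*π*A/L = 2*π*(A/L) := by ring
      have h2 : 2*π*(A/L) ≤ 2*π*(Real.sqrt (2/p) * (C₁*B) + (2/p)*(C₁*B)) :=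
        mul_le_mul_of_nonneg_left hABL (by positivity)
      calc 2*t*(m:ℝ) + A + 2*π*A/L
          ≤ 2*B + C₁*B + 2*π*(Real.sqrt (2/p) * (C₁*B) + (2/p)*(C₁*B)) := by
            rw [h1]
            linarith [h_tm, h_A, h2]
      _ = C*B := by rw [hC]; ring
    calc Real.exp (-C * (m:ℝ)^((1+2*a)/3))
        = Real.exp (-(C*B)) := by rw [hB]; ring_nf
    _ ≤ Real.exp (-(2*t*(m:ℝ) + A + 2*π*A/L)) := Real.exp_le_exp.mpr (by linarith)
    _ = Real.exp (-(2*t)*(m:ℝ)) * Real.exp (-A - 2*π*A/L) := by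
        rw [← Real.exp_add]; congr 1; ring
    _ ≤ R^m * ‖g.eval (Z θs)‖ := by
        apply mul_le_mul hRm hgval (Real.exp_pos _).le (pow_nonneg hRpos.le m)
    _ ≤ R^m₀ * ‖g.eval (Z θs)‖ :=
        mul_le_mul_of_nonneg_right hRm₀ (norm_nonneg _)
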